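/- Suppose that for every N ∈ ℕ there is a tuple γ*_N = (γ^{1*}_N,…,γ^{N*}_N) that is team optimal for (P_N). Suppose (A2): for the policy sequence γ* = (γ^{i*})_{i∈ℕ} the limit lim_{N→∞} (1/N) Σ_{i=1}^N E[c(ω₀, γ^{i*}(v^i), (1/N)Σ_{p=1}^N γ^{p*}(v^p))] exists and is finite. If limsup_{N→∞} (1/N) Σ_{i=1}^N ( E[c(ω₀, γ^{i*}_N(v^i), (1/N)Σ_{p=1}^N γ^{p*}_N(v^p))] − E[c(ω₀, γ^{i*}(v^i), (1/N)Σ_{p=1}^N γ^{p*}(v^p))] ) ≥ 0, then γ* is globally team optimal for (P_∞). -/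

import Mathlib

open MeasureTheory Filter ENNReal

/-- The `N`-decision-maker expected cost
`J_N(γ) = (1/N) E[ Σ_{i<N} c(ω₀, γ^i(v^i), (1/N) Σ_{p<N} γ^p(v^p)) ]`,
valued in `ℝ≥0∞` (the cost `c` is `[0,∞)`-valued). -/
noncomputable def teamCostN {Ω Ω₀ : Type*} [MeasurableSpace Ω] [MeasurableSpace Ω₀]
    (P : Measure Ω) (ω₀ : Ω → Ω₀) {m n : ℕ}
    (v : ℕ → Ω → (Fin m → ℝ))
    (c : Ω₀ → (Fin n → ℝ) → (Fin n → ℝ) → ℝ)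
    (γ : ℕ → (Fin m → ℝ) → (Fin n → ℝ)) (N : ℕ) : ℝ≥0∞ :=
  (N : ℝ≥0∞)⁻¹ *
    ∫⁻ ω, ENNReal.ofReal (∑ i ∈ Finset.range N,
      c (ω₀ ω) (γ i (v i ω)) ((N : ℝ)⁻¹ • ∑ p ∈ Finset.range N, γ p (v p ω))) ∂P

/-- The infinite-team cost `J(γ) = limsup_{N→∞} J_N(γ¹,…,γ^N)`. -/
noncomputable def teamCost {Ω Ω₀ : Type*} [MeasurableSpace Ω] [MeasurableSpace Ω₀]
    (P : Measure Ω) (ω₀ : Ω → Ω₀) {m n : ℕ}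
    (v : ℕ → Ω → (Fin m → ℝ))
    (c : Ω₀ → (Fin n → ℝ) → (Fin n → ℝ) → ℝ)
    (γ : ℕ → (Fin m → ℝ) → (Fin n → ℝ)) : ℝ≥0∞ :=
  Filter.limsup (teamCostN P ω₀ v c γ) Filter.atTop


-- auxiliary pointwise lemma
lemma aux_pt {a b M M' : ℝ≥0∞} (hM'top : M' ≠ ⊤) (hbtop : b ≠ ⊤) (hM'b : M' ≤ b)
    (h1 : (M : EReal) - (M' : EReal) < (a : EReal) - (b : EReal)) : M ≤ a := by
  have hbbot : ((b : ℝ≥0∞) : EReal) ≠ ⊥ := EReal.coe_ennreal_ne_bot _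
  have hbtop' : ((b : ℝ≥0∞) : EReal) ≠ ⊤ := fun h => hbtop (EReal.coe_ennreal_eq_top_iff.1 h)
  have h4 : (M : EReal) - M' + b < a :=
    (EReal.lt_sub_iff_add_lt (Or.inl hbbot) (Or.inl hbtop')).1 h1
  have hM'real : (M' : EReal) = ((M'.toReal : ℝ) : EReal) := by
    rw [← ENNReal.coe_toNNReal hM'top, EReal.coe_nnreal_eq_coe_real]
    rfl
  have h5 : (M : EReal) = (M : EReal) - M' + M' := by
    nth_rewrite 1 [hM'real]
    rw [hM'real, EReal.sub_add_cancel]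
  have h6 : (M : EReal) - M' + M' ≤ (M : EReal) - M' + b :=
    add_le_add (le_refl _) (EReal.coe_ennreal_le_coe_ennreal_iff.2 hM'b)
  have : (M : EReal) < a := by
    calc (M : EReal) = (M : EReal) - M' + M' := h5
    _ ≤ (M : EReal) - M' + b := h6
    _ < a := h4
  exact (EReal.coe_ennreal_lt_coe_ennreal_iff.1 this).le

set_option maxHeartbeats 1000000 in
theorem stmt2 {Ω Ω₀ : Type*} [MeasurableSpace Ω] [MeasurableSpace Ω₀]
    (P : Measure Ω) [IsProbabilityMeasure P]
    (ω₀ : Ω → Ω₀) (hω₀ : Measurable ω₀) (m n : ℕ)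
    (v : ℕ → Ω → (Fin m → ℝ)) (hv : ∀ i, Measurable (v i))
    (c : Ω₀ → (Fin n → ℝ) → (Fin n → ℝ) → ℝ)
    (hc_meas : Measurable (fun p : Ω₀ × (Fin n → ℝ) × (Fin n → ℝ) => c p.1 p.2.1 p.2.2))
    (hc_nonneg : ∀ w u μ', 0 ≤ c w u μ')
    -- for every `N`, a team-optimal tuple `γ*_N` for (P_N)
    (γN : ℕ → ℕ → (Fin m → ℝ) → (Fin n → ℝ))
    (hγN_meas : ∀ N i, Measurable (γN N i))
    (hγN_opt : ∀ N, teamCostN P ω₀ v c (γN N) N =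
      ⨅ δ : {δ : ℕ → (Fin m → ℝ) → (Fin n → ℝ) // ∀ i, Measurable (δ i)},
        teamCostN P ω₀ v c δ.1 N)
    -- the candidate policy sequence `γ*`
    (γstar : ℕ → (Fin m → ℝ) → (Fin n → ℝ))
    (hγstar_meas : ∀ i, Measurable (γstar i))
    -- (A2): `lim_N J_N(γ*)` exists and is finite
    (hA2 : ∃ L : ℝ≥0∞, L ≠ ⊤ ∧
      Filter.Tendsto (fun N => teamCostN P ω₀ v c γstar N) Filter.atTop (nhds L))
    -- `limsup_N ( J_N(γ*_N) − J_N(γ*) ) ≥ 0`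
    (hlim : (0 : EReal) ≤ Filter.limsup
      (fun N => ((teamCostN P ω₀ v c (γN N) N : ℝ≥0∞) : EReal)
        - ((teamCostN P ω₀ v c γstar N : ℝ≥0∞) : EReal)) Filter.atTop) :
    -- then `γ*` is globally team optimal for (P_∞)
    teamCost P ω₀ v c γstar =
      ⨅ γ : {γ : ℕ → (Fin m → ℝ) → (Fin n → ℝ) // ∀ i, Measurable (γ i)},
        teamCost P ω₀ v c γ.1 := by
  obtain ⟨L, hLtop, hL⟩ := hA2
  set a : ℕ → ℝ≥0∞ := fun N => teamCostN P ω₀ v c (γN N) N with ha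
  set b : ℕ → ℝ≥0∞ := fun N => teamCostN P ω₀ v c γstar N with hb
  have hbL : teamCost P ω₀ v c γstar = L := hL.limsup_eq
  refine le_antisymm ?_
    (iInf_le (fun γ : {γ : ℕ → (Fin m → ℝ) → (Fin n → ℝ) // ∀ i, Measurable (γ i)} =>
      teamCost P ω₀ v c γ.1) ⟨γstar, hγstar_meas⟩)
  rw [hbL]
  refine le_iInf fun γ => ?_
  -- key: L ≤ limsup a
  have key : L ≤ Filter.limsup a Filter.atTop := by
    refine le_of_forall_lt_imp_le_of_dense fun M hM => ?_
    obtain ⟨M', hMM', hM'L⟩ := exists_between hM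
    have hM'top : M' ≠ ⊤ := (hM'L.trans (lt_top_iff_ne_top.2 hLtop)).ne
    have hL1 : L < L + 1 := ENNReal.lt_add_right hLtop one_ne_zero
    have hbev : ∀ᶠ N in Filter.atTop, b N ∈ Set.Ioo M' (L + 1) :=
      hL.eventually (Ioo_mem_nhds hM'L hL1)
    have hneg : (M : EReal) - (M' : EReal) < 0 := by
      have hMtop : M ≠ ⊤ := (hMM'.trans (lt_top_iff_ne_top.2 hM'top)).ne
      have hlt : M.toReal < M'.toReal := (ENNReal.toReal_lt_toReal hMtop hM'top).2 hMM'
      rw [← ENNReal.coe_toNNReal hM'top, ← ENNReal.coe_toNNReal hMtop,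
        EReal.coe_nnreal_eq_coe_real, EReal.coe_nnreal_eq_coe_real, ← EReal.coe_sub]
      have h0 : ((M.toNNReal : ℝ) - (M'.toNNReal : ℝ)) < 0 := by
        simpa [ENNReal.toReal] using sub_neg.2 hlt
      exact_mod_cast h0
    have hfreq : ∃ᶠ N in Filter.atTop,
        (M : EReal) - (M' : EReal) < (a N : EReal) - (b N : EReal) :=
      Filter.frequently_lt_of_lt_limsup (by isBoundedDefault) (lt_of_lt_of_le hneg hlim)
    have hfreq2 : ∃ᶠ N in Filter.atTop, M ≤ a N := by
      refine (hfreq.and_eventually hbev).mono fun N ⟨h1, h2, h3⟩ => ?_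
      exact aux_pt hM'top (ne_top_of_lt h3) h2.le h1
    exact Filter.le_limsup_of_frequently_le hfreq2
  have hle : ∀ N, a N ≤ teamCostN P ω₀ v c γ.1 N := fun N =>
    le_of_eq_of_le (hγN_opt N)
      (iInf_le (fun δ : {δ : ℕ → (Fin m → ℝ) → (Fin n → ℝ) // ∀ i, Measurable (δ i)} =>
        teamCostN P ω₀ v c δ.1 N) γ)
  exact key.trans (Filter.limsup_le_limsup (Filter.Eventually.of_forall hle))
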